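/- Let t be an even integer with 2 ≤ t, and let C be a t-cycle on elements c_{i_0}, …, c_{i_{t-1}}. Then the t elements C^{t-2}(c_{i_0}), C^{t-4}(c_{i_1}), …, C^{0}(c_{i_{(t-2)/2}}), C^{t-2}(c_{i_{t/2}}), C^{t-4}(c_{i_{(t+2)/2}}), …, C^{0}(c_{i_{t-1}}) are pairwise distinct. -/
import Mathlib

lemma modeq_cases_aux {t a b : ℕ} (ht : 0 < t) (ha : a < 2*t) (hb : b < 2*t)
    (h : a ≡ b [MOD t]) : a = b ∨ a + t = b ∨ b + t = a := by
  have hd := (Nat.modEq_iff_dvd).mp h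
  obtain ⟨k, hk⟩ := hd
  have h1 : (t:ℤ)*k < (t:ℤ)*2 := by
    rw [← hk]; omega
  have h2 : (t:ℤ)*(-2) < (t:ℤ)*k := by
    rw [← hk]; omega
  have htz : (0:ℤ) < t := by exact_mod_cast ht
  have hk2 : k < 2 := lt_of_mul_lt_mul_left h1 htz.le
  have hk3 : -2 < k := lt_of_mul_lt_mul_left h2 htz.le
  interval_cases k <;> omega

lemma val_mod_half {t : ℕ} (ht : 2 ≤ t) (hev : Even t) (v : ℕ) (hv : v < t) :
    (v < t/2 ∧ v % (t/2) = v) ∨ (t/2 ≤ v ∧ v % (t/2) = v - (t/2)) := by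
  obtain ⟨h, rfl⟩ := hev
  have h2 : h + h = 2 * h := by ring
  rw [h2] at *
  have hh : 2*h/2 = h := by omega
  rw [hh]
  by_cases hc : v < h
  · left; exact ⟨hc, Nat.mod_eq_of_lt hc⟩
  · right
    refine ⟨by omega, ?_⟩
    rw [Nat.mod_eq_sub_mod (by omega), Nat.mod_eq_of_lt (by omega)]

/-- Lemma 4.5 (part A): for a t-cycle C on c₀,…,c_{t-1} (t even), the elements
C^{t-2-2(s mod (t/2))}(c_s), s = 0,…,t-1, are pairwise distinct. -/
theorem stmt_13 {X : Type*} (t : ℕ) (ht : 2 ≤ t) (hev : Even t)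
    (c : ZMod t → X) (hc : Function.Bijective c)
    (C : Equiv.Perm X) (hC : ∀ s : ZMod t, C (c s) = c (s + 1)) :
    Function.Injective
      (fun s : ZMod t => (C ^ (t - 2 - 2 * (s.val % (t / 2)))) (c s)) := by
  haveI : NeZero t := ⟨by omega⟩
  have hpow : ∀ (k : ℕ) (s : ZMod t), (C ^ k) (c s) = c (s + (k : ZMod t)) := by
    intro k
    induction k with
    | zero => intro s; simp
    | succ n ih =>
      intro s
      rw [pow_succ', Equiv.Perm.mul_apply, ih, hC]
      push_cast
      ring_nf
  intro s1 s2 heq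
  simp only [hpow] at heq
  have heq2 := hc.injective heq
  set v1 := s1.val with hv1
  set v2 := s2.val with hv2
  set e1 := t - 2 - 2 * (v1 % (t/2)) with he1
  set e2 := t - 2 - 2 * (v2 % (t/2)) with he2
  have hcast : ((v1 + e1 : ℕ) : ZMod t) = ((v2 + e2 : ℕ) : ZMod t) := by
    push_cast
    rw [hv1, hv2, ZMod.natCast_val, ZMod.natCast_val, ZMod.cast_id, ZMod.cast_id]
    exact heq2
  have hmod : (v1 + e1) ≡ (v2 + e2) [MOD t] := (ZMod.natCast_eq_natCast_iff _ _ _).mp hcast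
  have hvb1 : v1 < t := ZMod.val_lt s1
  have hvb2 : v2 < t := ZMod.val_lt s2
  have hr1 := val_mod_half ht hev v1 hvb1
  have hr2 := val_mod_half ht hev v2 hvb2
  have hhalf : t / 2 * 2 = t := Nat.div_mul_cancel hev.two_dvd
  have hb1 : v1 + e1 < 2*t := by omega
  have hb2 : v2 + e2 < 2*t := by omega
  have hcases := modeq_cases_aux (by omega) hb1 hb2 hmod
  have hv : v1 = v2 := by
    rcases hr1 with ⟨h1, hm1⟩ | ⟨h1, hm1⟩ <;> rcases hr2 with ⟨h2, hm2⟩ | ⟨h2, hm2⟩ <;>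
      rw [hm1] at he1 <;> rw [hm2] at he2 <;> omega
  have : (s1 : ZMod t) = s2 := by
    have := congrArg (fun n : ℕ => (n : ZMod t)) hv
    simpa [hv1, hv2, ZMod.natCast_val, ZMod.cast_id] using this
  exact this
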